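/- arXiv:2508.10111 — 8 statements merged into one kernel-verified Lean document; each statement's English description precedes it below -/
import Mathlib

section
/- Let G = (V, Σ, P, S) be a CFG in C2F⁺ᵉ form (productions of shape A → σ, A → ε, A → B, A → BC) and D = (Q, Σ, δ, q₀, F) a DFA. Define the triple grammar G∩ with nonterminals ⟨p,A,q⟩ for p,q ∈ Q, A ∈ V and productions: (1) ⟨p,A,q⟩ → σ whenever A → σ ∈ P and δ(p,σ) = q; (2) ⟨p,A,p⟩ → ε whenever A → ε ∈ P; (3) ⟨p,A,r⟩ → ⟨p,B,q⟩⟨q,C,r⟩ whenever A → BC ∈ P, for all p,q,r ∈ Q; (4) ⟨p,A,q⟩ → ⟨p,B,q⟩ whenever A → B ∈ P. Then for all p,q ∈ Q and A ∈ V, the language generated from ⟨p,A,q⟩ equals L(A) ∩ {w | δ*(p,w) = q}. -/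
/-- A context-free grammar in C2F⁺ᵉ form: productions of shape
`A → σ`, `A → ε`, `A → B`, `A → BC`. -/
structure C2F (N T : Type) where
  prodTerm : N → T → Prop
  prodEps : N → Prop
  prodUnit : N → N → Prop
  prodBin : N → N → N → Prop

namespace C2F

/-- `G.Derives A w` : the terminal word `w` is derivable from nonterminal `A`. -/
inductive Derives {N T : Type} (G : C2F N T) : N → List T → Prop
  | term {A : N} {σ : T} : G.prodTerm A σ → Derives G A [σ]
  | eps {A : N} : G.prodEps A → Derives G A []
  | unit {A B : N} {w : List T} : G.prodUnit A B → Derives G B w → Derives G A w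
  | bin {A B C : N} {u v : List T} : G.prodBin A B C → Derives G B u → Derives G C v →
      Derives G A (u ++ v)

end C2F

/-- Derivability from the nonterminal `⟨p, A, q⟩` of the triple intersection grammar of a
C2F⁺ᵉ grammar `G` and a DFA `D`. -/
inductive TripleDerives {N T Q : Type} (G : C2F N T) (D : DFA T Q) : Q → N → Q → List T → Prop
  | term {p q : Q} {A : N} {σ : T} : G.prodTerm A σ → D.step p σ = q →
      TripleDerives G D p A q [σ]
  | eps {p : Q} {A : N} : G.prodEps A → TripleDerives G D p A p []
  | unit {p q : Q} {A B : N} {w : List T} : G.prodUnit A B → TripleDerives G D p B q w →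
      TripleDerives G D p A q w
  | bin {p q r : Q} {A B C : N} {u v : List T} : G.prodBin A B C →
      TripleDerives G D p B q u → TripleDerives G D q C r v →
      TripleDerives G D p A r (u ++ v)

lemma evalFrom_app {T Q : Type} (D : DFA T Q) (p : Q) (u v : List T) :
    D.evalFrom p (u ++ v) = D.evalFrom (D.evalFrom p u) v :=
  List.foldl_append ..

lemma triple_forward {N T Q : Type} {G : C2F N T} {D : DFA T Q} {p q : Q} {A : N} {w : List T}
    (h : TripleDerives G D p A q w) : G.Derives A w ∧ D.evalFrom p w = q := by
  induction h with
  | term h hs => exact ⟨.term h, hs⟩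
  | eps h => exact ⟨.eps h, rfl⟩
  | unit h _ ih => exact ⟨.unit h ih.1, ih.2⟩
  | bin h _ _ ih1 ih2 =>
      refine ⟨.bin h ih1.1 ih2.1, ?_⟩
      rw [evalFrom_app, ih1.2, ih2.2]

lemma triple_backward {N T Q : Type} {G : C2F N T} {D : DFA T Q} {A : N} {w : List T}
    (h : G.Derives A w) : ∀ p : Q, TripleDerives G D p A (D.evalFrom p w) w := by
  induction h with
  | term h => exact fun p => .term h rfl
  | eps h => exact fun p => .eps h
  | unit h _ ih => exact fun p => .unit h (ih p)
  | bin h _ _ ih1 ih2 =>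
      intro p
      rw [evalFrom_app]
      exact .bin h (ih1 p) (ih2 _)

/-- the language generated from `⟨p,A,q⟩` in the triple grammar equals
`L(A) ∩ {w | δ*(p,w) = q}`. -/
theorem triple_language_eq {N T Q : Type} (G : C2F N T) (D : DFA T Q) :
    ∀ (p q : Q) (A : N),
      {w : List T | TripleDerives G D p A q w} =
        {w : List T | G.Derives A w} ∩ {w : List T | D.evalFrom p w = q} := by
  intro p q A
  ext w
  constructor
  · intro h; exact triple_forward h
  · rintro ⟨hd, he⟩
    have := triple_backward (D := D) hd p
    rwa [he] at this
end

section
/- With the triple grammar construction as defined, for all p,q ∈ Q and A ∈ V: if w is derivable from ⟨p,A,q⟩ in the intersection grammar, then w is derivable from A in G and δ*(p,w) = q. -/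
/-- soundness of the triple construction. -/
theorem triple_sound {N T Q : Type} (G : C2F N T) (D : DFA T Q) :
    ∀ (p q : Q) (A : N) (w : List T),
      TripleDerives G D p A q w → G.Derives A w ∧ D.evalFrom p w = q := by
  intro p q A w h
  induction h with
  | term hp hs => exact ⟨C2F.Derives.term hp, hs⟩
  | eps hp => exact ⟨C2F.Derives.eps hp, rfl⟩
  | unit hp _ ih => exact ⟨C2F.Derives.unit hp ih.1, ih.2⟩
  | bin hp _ _ ih1 ih2 =>
      refine ⟨C2F.Derives.bin hp ih1.1 ih2.1, ?_⟩
      rw [DFA.evalFrom_of_append, ih1.2, ih2.2]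
end

section
/- With the triple grammar construction as defined, for all p,q ∈ Q and A ∈ V: if w is derivable from A in G and δ*(p,w) = q, then w is derivable from ⟨p,A,q⟩ in the intersection grammar. -/
/-- completeness of the triple construction. -/
theorem triple_complete {N T Q : Type} (G : C2F N T) (D : DFA T Q) :
    ∀ (p q : Q) (A : N) (w : List T),
      G.Derives A w → D.evalFrom p w = q → TripleDerives G D p A q w := by
  intro p q A w h
  induction h generalizing p q with
  | term hp =>
      intro he
      exact TripleDerives.term hp (by simpa [DFA.evalFrom] using he)
  | eps hp =>
      intro he
      simp [DFA.evalFrom] at he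
      subst he
      exact TripleDerives.eps hp
  | unit hp _ ih =>
      intro he
      exact TripleDerives.unit hp (ih p q he)
  | bin hp _ _ ih1 ih2 =>
      intro he
      rw [DFA.evalFrom, List.foldl_append] at he
      exact TripleDerives.bin hp (ih1 p _ rfl) (ih2 _ q he)
end

section
/- If ε is derivable from nonterminal ⟨p,A,q⟩ in the intersection grammar (triple construction of a C2F⁺ᵉ CFG with a DFA), then p = q. -/
/-- if `ε` is derivable from `⟨p,A,q⟩` in the intersection grammar then `p = q`. -/
theorem triple_eps_eq {N T Q : Type} (G : C2F N T) (D : DFA T Q) (p q : Q) (A : N)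
    (h : TripleDerives G D p A q []) : p = q := by
  generalize hw : ([] : List T) = w at h
  induction h with
  | term _ _ => simp at hw
  | eps _ => rfl
  | unit _ _ ih => exact ih hw
  | bin _ _ _ ih1 ih2 =>
    rcases List.append_eq_nil_iff.mp hw.symm with ⟨h1, h2⟩
    exact (ih1 h1.symm).trans (ih2 h2.symm)
end

section
/- Let G be a CFG and suppose nonterminal B ≠ A appears in exactly one production A → αBβ of G, and B has a single production B → γ where γ contains no occurrence of B or A. Let G' be the grammar obtained by removing B and its production and replacing A → αBβ with A → αγβ. Then L(G') = L(G). -/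
open Symbol in
/-- inlinable nonterminal elimination. If `B ≠ A` occurs in exactly one
production `A → αBβ`, and `B` has the single production `B → γ` where `γ` contains no `B` or
`A`, then replacing these by `A → αγβ` and deleting `B`'s production preserves the language. -/
theorem inline_elimination {T : Type} (g : ContextFreeGrammar T)
    [DecidableEq (ContextFreeRule T g.NT)]
    (A B : g.NT) (α β γ : List (Symbol T g.NT))
    (hBA : B ≠ A) (hBS : g.initial ≠ B)
    (hr : (⟨A, α ++ [Symbol.nonterminal B] ++ β⟩ : ContextFreeRule T g.NT) ∈ g.rules)
    (hrB : (⟨B, γ⟩ : ContextFreeRule T g.NT) ∈ g.rules)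
    -- `B` occurs on a right-hand side only in the rule `A → αBβ`, and only once there:
    (honly : ∀ r' ∈ g.rules, Symbol.nonterminal B ∈ r'.output →
      r' = (⟨A, α ++ [Symbol.nonterminal B] ++ β⟩ : ContextFreeRule T g.NT))
    (hα : Symbol.nonterminal B ∉ α) (hβ : Symbol.nonterminal B ∉ β)
    -- `B → γ` is the single production of `B`:
    (hsingle : ∀ r' ∈ g.rules, r'.input = B → r' = (⟨B, γ⟩ : ContextFreeRule T g.NT))
    -- `γ` contains no occurrence of `B` or `A`:
    (hγB : Symbol.nonterminal B ∉ γ) (hγA : Symbol.nonterminal A ∉ γ) :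
    (ContextFreeGrammar.mk g.NT g.initial
        (insert (⟨A, α ++ γ ++ β⟩ : ContextFreeRule T g.NT)
          ((g.rules.erase ⟨A, α ++ [Symbol.nonterminal B] ++ β⟩).erase ⟨B, γ⟩))).language =
      g.language := by
  classical
  set g' : ContextFreeGrammar T := ContextFreeGrammar.mk g.NT g.initial
      (insert (⟨A, α ++ γ ++ β⟩ : ContextFreeRule T g.NT)
        ((g.rules.erase ⟨A, α ++ [Symbol.nonterminal B] ++ β⟩).erase ⟨B, γ⟩)) with hg'
  -- substitution replacing each occurrence of `B` by `γ`
  set sub : List (Symbol T g.NT) → List (Symbol T g.NT) :=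
    fun l => l.flatMap (fun s => if s = Symbol.nonterminal B then γ else [s]) with hsub
  have sub_append : ∀ x y : List (Symbol T g.NT), sub (x ++ y) = sub x ++ sub y := by
    intro x y; simp [hsub]
  have sub_eq : ∀ l : List (Symbol T g.NT), Symbol.nonterminal B ∉ l → sub l = l := by
    intro l hl
    induction l with
    | nil => rfl
    | cons a l ih =>
      have ha : a ≠ Symbol.nonterminal B := fun h => hl (h ▸ (List.mem_cons_self : a ∈ a :: l))
      have : sub (a :: l) = (if a = Symbol.nonterminal B then γ else [a]) ++ sub l := by
        simp [hsub]
      rw [this, if_neg ha, ih (fun h => hl (List.mem_cons_of_mem a h))]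
      rfl
  have sub_B : sub [Symbol.nonterminal B] = γ := by simp [hsub]
  -- forward direction: g-derivations become g'-derivations under `sub`
  have dir1 : ∀ u v : List (Symbol T g.NT), g.Derives u v → g'.Derives (sub u) (sub v) := by
    intro u v huv
    induction huv with
    | refl => rfl
    | tail _ hp ih =>
      refine ih.trans ?_
      obtain ⟨r, hrmem, hrw⟩ := hp
      obtain ⟨p, q, rfl, rfl⟩ := hrw.exists_parts
      by_cases hB : r = ⟨B, γ⟩
      · subst hB
        rw [sub_append, sub_append, sub_append, sub_append, sub_B, sub_eq γ hγB]
      · have hrin : r.input ≠ B := fun h => hB (hsingle r hrmem h)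
        have subin : sub [Symbol.nonterminal r.input] = [Symbol.nonterminal r.input] :=
          sub_eq _ (by simpa using Ne.symm hrin)
        by_cases hA : r = ⟨A, α ++ [Symbol.nonterminal B] ++ β⟩
        · subst hA
          rw [sub_append, sub_append, sub_append, sub_append, subin,
            sub_append, sub_append, sub_B, sub_eq α hα, sub_eq β hβ]
          refine ContextFreeGrammar.Produces.single
            ⟨⟨A, α ++ γ ++ β⟩, Finset.mem_insert_self _ _, ?_⟩
          have := ContextFreeRule.rewrites_of_exists_parts
            (⟨A, α ++ γ ++ β⟩ : ContextFreeRule T g.NT) (sub p) (sub q)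
          simpa [List.append_assoc] using this
        · have hout : Symbol.nonterminal B ∉ r.output := fun h => hA (honly r hrmem h)
          have hmem' : r ∈ g'.rules :=
            Finset.mem_insert_of_mem
              (Finset.mem_erase.mpr ⟨hB, Finset.mem_erase.mpr ⟨hA, hrmem⟩⟩)
          rw [sub_append, sub_append, sub_append, sub_append, subin, sub_eq r.output hout]
          exact ContextFreeGrammar.Produces.single
            ⟨r, hmem', ContextFreeRule.rewrites_of_exists_parts r (sub p) (sub q)⟩
  -- backward direction: g'-derivations are g-derivations
  have dir2 : ∀ u v : List (Symbol T g.NT), g'.Derives u v → g.Derives u v := by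
    intro u v huv
    induction huv with
    | refl => rfl
    | tail _ hp ih =>
      refine ih.trans ?_
      obtain ⟨r, hrmem, hrw⟩ := hp
      obtain ⟨p, q, rfl, rfl⟩ := hrw.exists_parts
      rcases Finset.mem_insert.mp hrmem with h | h
      · subst h
        have s1 : g.Produces (p ++ [Symbol.nonterminal A] ++ q)
            (p ++ (α ++ [Symbol.nonterminal B] ++ β) ++ q) :=
          ⟨_, hr, ContextFreeRule.rewrites_of_exists_parts _ p q⟩
        have s2 : g.Produces (p ++ (α ++ [Symbol.nonterminal B] ++ β) ++ q)
            (p ++ (α ++ γ ++ β) ++ q) := by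
          refine ⟨⟨B, γ⟩, hrB, ?_⟩
          have := ContextFreeRule.rewrites_of_exists_parts
            (⟨B, γ⟩ : ContextFreeRule T g.NT) (p ++ α) (β ++ q)
          simpa [List.append_assoc] using this
        exact s1.trans_derives s2.single
      · exact ContextFreeGrammar.Produces.single
          ⟨r, (Finset.mem_erase.mp (Finset.mem_erase.mp h).2).2,
            ContextFreeRule.rewrites_of_exists_parts r p q⟩
  ext w
  constructor
  · intro hw
    exact dir2 _ _ hw
  · intro hw
    have := dir1 _ _ hw
    have e1 : sub [Symbol.nonterminal g.initial] = [Symbol.nonterminal g.initial] :=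
      sub_eq _ (by simpa using Ne.symm hBS)
    have e2 : sub (List.map Symbol.terminal w) = List.map Symbol.terminal w :=
      sub_eq _ (by simp)
    rw [e1, e2] at this
    exact this
end

section
/- The intersection of the language of a CFG G (in C2F⁺ᵉ form) with the language of a DFA D is nonempty if and only if some triple ⟨q₀, S, f⟩ with f ∈ F is a generating nonterminal of the intersection grammar. -/
lemma tripleDerives_iff {N T Q : Type} {G : C2F N T} {D : DFA T Q} {p : Q} {A : N} {q : Q}
    {w : List T} : TripleDerives G D p A q w ↔ G.Derives A w ∧ D.evalFrom p w = q := by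
  constructor
  · intro h
    induction h with
    | term h hs => exact ⟨.term h, hs⟩
    | eps h => exact ⟨.eps h, rfl⟩
    | unit h _ ih => exact ⟨.unit h ih.1, ih.2⟩
    | bin h _ _ ih1 ih2 =>
      refine ⟨.bin h ih1.1 ih2.1, ?_⟩
      rw [DFA.evalFrom_of_append, ih1.2, ih2.2]
  · rintro ⟨h, rfl⟩
    induction h generalizing p with
    | term h => exact .term h rfl
    | eps h => exact .eps h
    | unit h _ ih => exact .unit h ih
    | bin h _ _ ih1 ih2 =>
      rw [DFA.evalFrom_of_append]
      exact .bin h ih1 ih2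

/-- `L(G) ∩ L(D)` is nonempty iff some triple `⟨q₀,S,f⟩` with `f ∈ F` is a
generating nonterminal of the intersection grammar. -/
theorem intersection_nonempty_iff_generating {N T Q : Type} (G : C2F N T) (D : DFA T Q)
    (S : N) :
    (∃ w : List T, G.Derives S w ∧ w ∈ D.accepts) ↔
      ∃ f ∈ D.accept, ∃ w : List T, TripleDerives G D D.start S f w := by
  constructor
  · rintro ⟨w, hw, hacc⟩
    exact ⟨D.eval w, hacc, w, tripleDerives_iff.mpr ⟨hw, rfl⟩⟩
  · rintro ⟨f, hf, w, h⟩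
    obtain ⟨hd, he⟩ := tripleDerives_iff.mp h
    exact ⟨w, hd, by simpa [DFA.mem_accepts, DFA.eval, he]⟩
end

section
/- Let D be a DFA and G a CFG in C2F⁺ᵉ form. In the triple intersection grammar, if w is derivable from ⟨p,A,q⟩, then the length of w equals the number of DFA transitions consumed going from p to q, i.e., δ*(p,w) = q and in particular if |w| = 0 then p = q. -/
/-- a derivation from `⟨p,A,q⟩` consumes exactly the DFA transitions from `p`
to `q`: `δ*(p,w) = q`, and in particular `|w| = 0` implies `p = q`. -/
theorem triple_run {N T Q : Type} (G : C2F N T) (D : DFA T Q) (p q : Q) (A : N) (w : List T)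
    (h : TripleDerives G D p A q w) :
    D.evalFrom p w = q ∧ (w.length = 0 → p = q) := by
  induction h with
  | term hp hs => exact ⟨hs, by simp⟩
  | eps hp => exact ⟨rfl, fun _ => rfl⟩
  | unit hp _ ih => exact ih
  | bin hp _ _ ih1 ih2 =>
    refine ⟨by rw [DFA.evalFrom_of_append, ih1.1, ih2.1], fun hl => ?_⟩
    simp only [List.length_append, Nat.add_eq_zero] at hl
    exact (ih1.2 hl.1).trans (ih2.2 hl.2)
end

section
/- If a CFG G is in Chomsky normal form (productions only of shapes A → σ and A → BC), then the worklist algorithm that (i) initializes a set G of triples ⟨p,A,q⟩ for all A → σ with δ(p,σ)=q, and (ii) repeatedly, for each triple ⟨y,X,z⟩ popped from the worklist, adds ⟨y,A,q⟩ whenever A → XC ∈ P and ⟨z,C,q⟩ ∈ G, adds ⟨q,A,z⟩ whenever A → BX ∈ P and ⟨q,B,y⟩ ∈ G, terminates, and upon termination the set G equals exactly the set of triples ⟨p,A,q⟩ such that some word w is derivable from A in the CFG with δ*(p,w) = q. -/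
/-- One round of the worklist algorithm: keep everything already found, add all triples
obtained from terminal rules (initialization) and from binary rules with matching
intermediate states. -/
def worklistStep {N T Q : Type} (G : C2F N T) (D : DFA T Q)
    (X : Set (Q × N × Q)) : Set (Q × N × Q) :=
  X ∪ {t | ∃ σ : T, G.prodTerm t.2.1 σ ∧ D.step t.1 σ = t.2.2}
    ∪ {t | ∃ (B C : N) (q : Q), G.prodBin t.2.1 B C ∧ (t.1, B, q) ∈ X ∧ (q, C, t.2.2) ∈ X}

section Aux
variable {N T Q : Type} (G : C2F N T) (D : DFA T Q)

lemma worklist_infl (X : Set (Q × N × Q)) : X ⊆ worklistStep G D X :=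
  (Set.subset_union_left).trans Set.subset_union_left

lemma worklist_stab [Fintype N] [Fintype Q] :
    ∃ n, worklistStep G D ((worklistStep G D)^[n] ∅) = (worklistStep G D)^[n] ∅ := by
  by_contra h
  push_neg at h
  have key : ∀ k, k ≤ ((worklistStep G D)^[k] ∅).ncard := by
    intro k
    induction k with
    | zero => exact Nat.zero_le _
    | succ k ih =>
      have hss : (worklistStep G D)^[k] ∅ ⊂ (worklistStep G D)^[k+1] ∅ := by
        rw [Function.iterate_succ_apply']
        exact HasSubset.Subset.ssubset_of_ne (worklist_infl G D _) (Ne.symm (h k))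
      have := Set.ncard_lt_ncard hss (Set.toFinite _)
      omega
  have hk := key (Fintype.card (Q × N × Q) + 1)
  have hle : ((worklistStep G D)^[Fintype.card (Q × N × Q) + 1] ∅).ncard
      ≤ Fintype.card (Q × N × Q) := by
    have := Set.ncard_le_ncard
      (Set.subset_univ ((worklistStep G D)^[Fintype.card (Q × N × Q) + 1] ∅)) Set.finite_univ
    simpa [Set.ncard_univ] using this
  omega

/-- soundness: every triple produced is derivable -/
lemma worklist_sound (n : ℕ) :
    (worklistStep G D)^[n] ∅ ⊆
      {t : Q × N × Q | ∃ w : List T, G.Derives t.2.1 w ∧ D.evalFrom t.1 w = t.2.2} := by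
  induction n with
  | zero => simp
  | succ n ih =>
    rw [Function.iterate_succ_apply']
    rintro ⟨p, A, q⟩ (((ht | ⟨σ, h1, h2⟩) | ⟨B, C, r, h1, h2, h3⟩))
    · exact ih ht
    · exact ⟨[σ], C2F.Derives.term h1, h2⟩
    · obtain ⟨u, hu1, hu2⟩ := ih h2
      obtain ⟨v, hv1, hv2⟩ := ih h3
      refine ⟨u ++ v, C2F.Derives.bin h1 hu1 hv1, ?_⟩
      rw [DFA.evalFrom_of_append, hu2, hv2]

/-- completeness: any fixed point contains all derivable triples -/
lemma worklist_complete (hEps : ∀ A : N, ¬ G.prodEps A)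
    (hUnit : ∀ A B : N, ¬ G.prodUnit A B)
    (X : Set (Q × N × Q)) (hX : worklistStep G D X = X)
    {A : N} {w : List T} (hd : G.Derives A w) :
    ∀ p : Q, (p, A, D.evalFrom p w) ∈ X := by
  induction hd with
  | @term A σ h =>
    intro p
    rw [← hX]
    exact Or.inl (Or.inr ⟨σ, h, by simp [DFA.evalFrom]⟩)
  | eps h => exact absurd h (hEps _)
  | unit h _ _ => exact absurd h (hUnit _ _)
  | @bin A B C u v h _ _ ihB ihC =>
    intro p
    rw [← hX]
    refine Or.inr ⟨B, C, D.evalFrom p u, h, ihB p, ?_⟩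
    have := ihC (D.evalFrom p u)
    rwa [DFA.evalFrom_of_append]

end Aux

/-- for a CNF grammar (no `ε`- and no unit productions), the worklist algorithm
terminates (the iteration reaches a fixed point after finitely many rounds), and the resulting
set is exactly the set of triples `⟨p,A,q⟩` such that some word `w` is derivable from `A` with
`δ*(p,w) = q`. -/
theorem worklist_correct {N T Q : Type} [Fintype N] [Fintype Q] (G : C2F N T) (D : DFA T Q)
    (hEps : ∀ A : N, ¬ G.prodEps A) (hUnit : ∀ A B : N, ¬ G.prodUnit A B) :
    ∃ n : ℕ, worklistStep G D ((worklistStep G D)^[n] ∅) = (worklistStep G D)^[n] ∅ ∧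
      (worklistStep G D)^[n] ∅ =
        {t : Q × N × Q | ∃ w : List T, G.Derives t.2.1 w ∧ D.evalFrom t.1 w = t.2.2} := by
  obtain ⟨n, hn⟩ := worklist_stab G D
  refine ⟨n, hn, Set.Subset.antisymm (worklist_sound G D n) ?_⟩
  rintro ⟨p, A, q⟩ ⟨w, hd, he⟩
  have := worklist_complete G D hEps hUnit _ hn hd p
  rwa [he] at this
end
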